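/- Let n ≥ 1 and let H : ℝⁿ → ℝ be convex with H(0) = 0 and H(p) ≥ |p|² for all p ∈ ℝⁿ, and assume H is radially strictly convex. Then for every p ∈ ℝⁿ \ {0} there exists a unique λ_p > 0 such that (1 + H(λ_p p))/λ_p = inf_{λ>0} (1 + H(λp))/λ. -/

import Mathlib

/-- The effective burning velocity associated with an effective Hamiltonian `H`:
`α(p) = inf_{λ > 0} (1 + H(λ p)) / λ`. -/
noncomputable def effAlpha {n : ℕ} (H : EuclideanSpace ℝ (Fin n) → ℝ)
    (p : EuclideanSpace ℝ (Fin n)) : ℝ :=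
  sInf {y : ℝ | ∃ l : ℝ, 0 < l ∧ (1 + H (l • p)) / l = y}

/-- `H` is radially strictly convex: whenever `H` is affine on a segment `[p₁, p₂]`
with `H(p₂) > 0`, it is constant on that segment. -/
def RadStrictConvex {n : ℕ} (H : EuclideanSpace ℝ (Fin n) → ℝ) : Prop :=
  ∀ p₁ p₂ : EuclideanSpace ℝ (Fin n),
    (∀ s ∈ Set.Icc (0:ℝ) 1,
      H ((1 - s) • p₁ + s • p₂) = (1 - s) * H p₁ + s * H p₂) →
    0 < H p₂ →
    ∀ s ∈ Set.Icc (0:ℝ) 1, H ((1 - s) • p₁ + s • p₂) = H p₂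

section aux

variable {n : ℕ} (H : EuclideanSpace ℝ (Fin n) → ℝ)

/-- If two positive `l₁ ≤ l₂` both attain the infimum, they are equal. -/
lemma eq_of_both_min (hgrow : ∀ p, H p ≥ ‖p‖ ^ 2) (hconv : ConvexOn ℝ Set.univ H)
    (hrad : RadStrictConvex H) (p : EuclideanSpace ℝ (Fin n)) (hp : p ≠ 0)
    (hbdd : BddBelow {y : ℝ | ∃ l : ℝ, 0 < l ∧ (1 + H (l • p)) / l = y})
    {l₁ l₂ : ℝ} (h₁ : 0 < l₁ ∧ (1 + H (l₁ • p)) / l₁ = effAlpha H p)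
    (h₂ : 0 < l₂ ∧ (1 + H (l₂ • p)) / l₂ = effAlpha H p) (hle : l₁ ≤ l₂) :
    l₁ = l₂ := by
  obtain ⟨hl₁, e₁⟩ := h₁
  obtain ⟨hl₂, e₂⟩ := h₂
  set m := effAlpha H p with hm
  have hH0 : 0 ≤ H (l₁ • p) := le_trans (by positivity) (hgrow _)
  have g₁ : 1 + H (l₁ • p) = m * l₁ := by
    field_simp at e₁; linarith [e₁]
  have g₂ : 1 + H (l₂ • p) = m * l₂ := by
    field_simp at e₂; linarith [e₂]
  have hmpos : 0 < m := by
    have : 0 < 1 + H (l₁ • p) := by linarith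
    nlinarith
  -- H is affine on the segment
  have haff : ∀ s ∈ Set.Icc (0:ℝ) 1,
      H ((1 - s) • (l₁ • p) + s • (l₂ • p)) = (1 - s) * H (l₁ • p) + s * H (l₂ • p) := by
    intro s hs
    obtain ⟨hs0, hs1⟩ := hs
    set ls := (1 - s) * l₁ + s * l₂ with hls
    have hlspos : 0 < ls := by nlinarith
    have hpt : (1 - s) • (l₁ • p) + s • (l₂ • p) = ls • p := by
      rw [smul_smul, smul_smul, hls, add_smul]
    have hle' : H (ls • p) ≤ (1 - s) * H (l₁ • p) + s * H (l₂ • p) := by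
      have h := hconv.2 (Set.mem_univ (l₁ • p)) (Set.mem_univ (l₂ • p))
        (by linarith : (0:ℝ) ≤ 1 - s) hs0 (by ring)
      rw [hpt] at h
      simpa [smul_eq_mul] using h
    have hge : m ≤ (1 + H (ls • p)) / ls :=
      csInf_le hbdd ⟨ls, hlspos, rfl⟩
    have hge' : m * ls ≤ 1 + H (ls • p) := by
      rw [le_div_iff₀ hlspos] at hge; linarith
    have : (1 - s) * H (l₁ • p) + s * H (l₂ • p) = m * ls - 1 := by
      rw [hls]; nlinarith [g₁, g₂]
    rw [hpt]
    linarith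
  have hpos2 : 0 < H (l₂ • p) := by
    have h1 : (0:ℝ) < ‖l₂ • p‖ ^ 2 := by
      have h' : ‖l₂ • p‖ ≠ 0 :=
        norm_ne_zero_iff.mpr (smul_ne_zero (ne_of_gt hl₂) hp)
      positivity
    linarith [hgrow (l₂ • p)]
  have hc := hrad (l₁ • p) (l₂ • p) haff hpos2 0 (by norm_num)
  simp only [sub_zero, one_smul, zero_smul, add_zero] at hc
  -- hc : H (l₁ • p) = H (l₂ • p)
  have : m * l₁ = m * l₂ := by linarith
  exact mul_left_cancel₀ (ne_of_gt hmpos) this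

end aux

/-- For convex `H` with `H(0) = 0`, `H(p) ≥ |p|²`, radially strictly
convex, and any `p ≠ 0`, there is a unique `λ_p > 0` attaining the infimum defining
`α(p)`. -/
theorem statement4 {n : ℕ} (hn : 1 ≤ n) (H : EuclideanSpace ℝ (Fin n) → ℝ)
    (hconv : ConvexOn ℝ Set.univ H) (h0 : H 0 = 0)
    (hgrow : ∀ p, H p ≥ ‖p‖ ^ 2) (hrad : RadStrictConvex H) :
    ∀ p : EuclideanSpace ℝ (Fin n), p ≠ 0 →
      ∃! l : ℝ, 0 < l ∧ (1 + H (l • p)) / l = effAlpha H p := by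
  intro p hp
  set S := {y : ℝ | ∃ l : ℝ, 0 < l ∧ (1 + H (l • p)) / l = y} with hS
  have hnum_nonneg : ∀ l : ℝ, 0 ≤ 1 + H (l • p) := by
    intro l
    have := hgrow (l • p)
    nlinarith [sq_nonneg ‖l • p‖]
  have hbdd : BddBelow S := by
    refine ⟨0, ?_⟩
    rintro y ⟨l, hl, rfl⟩
    exact div_nonneg (hnum_nonneg l) hl.le
  -- continuity of H
  have hHcont : Continuous H := by
    rw [← continuousOn_univ]
    exact hconv.continuousOn isOpen_univ
  set f : ℝ → ℝ := fun l => (1 + H (l • p)) / l with hf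
  have hfcont : ContinuousOn f (Set.Ici (1/2 : ℝ) ∩ Set.Iic ((2 + H p) / ‖p‖^2 + 1)) := by
    apply ContinuousOn.div
    · exact (continuous_const.add (hHcont.comp (continuous_id.smul continuous_const))).continuousOn
    · exact continuousOn_id
    · rintro x ⟨hx, -⟩
      simp only [Set.mem_Ici] at hx
      intro h; rw [h] at hx; norm_num at hx
  -- bounds
  set M : ℝ := 1 + H p with hM
  have hMpos : 0 < M := by
    have := hgrow p
    rw [hM]
    nlinarith [sq_nonneg ‖p‖]
  have hpn : 0 < ‖p‖^2 := by
    have h' : ‖p‖ ≠ 0 := norm_ne_zero_iff.mpr hp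
    positivity
  set a : ℝ := 1 / (M + 1) with ha
  set b : ℝ := max 1 ((M + 1) / ‖p‖^2) with hb
  have hapos : 0 < a := by positivity
  have ha1 : a ≤ 1 := by
    rw [ha, div_le_one (by linarith)]; linarith
  have hb1 : 1 ≤ b := le_max_left _ _
  -- f large outside [a,b]
  have houtlow : ∀ l : ℝ, 0 < l → l < a → M < f l := by
    intro l hl hla
    have h1 : (1:ℝ) / l ≤ f l := by
      have hH : 0 ≤ H (l • p) := le_trans (by positivity) (hgrow _)
      rw [hf, div_le_div_iff₀ hl hl]
      nlinarith
    have h2 : M + 1 < 1 / l := by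
      rw [lt_div_iff₀ hl]
      calc (M + 1) * l < (M + 1) * a := by
            apply mul_lt_mul_of_pos_left hla (by linarith)
        _ = 1 := by rw [ha]; field_simp
    linarith
  have houthigh : ∀ l : ℝ, b < l → M < f l := by
    intro l hbl
    have hl : 0 < l := lt_of_lt_of_le one_pos (le_trans hb1 hbl.le)
    have h1 : H (l • p) ≥ l^2 * ‖p‖^2 := by
      have := hgrow (l • p)
      rw [norm_smul] at this
      calc H (l • p) ≥ (‖l‖ * ‖p‖)^2 := this
        _ = l^2 * ‖p‖^2 := by rw [mul_pow, Real.norm_eq_abs, sq_abs]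
    have h2 : l * ‖p‖^2 ≤ f l := by
      rw [hf, le_div_iff₀ hl]
      nlinarith
    have h3 : (M + 1) / ‖p‖^2 < l := lt_of_le_of_lt (le_max_right _ _) hbl
    have h4 : M + 1 < l * ‖p‖^2 := by
      rw [div_lt_iff₀ hpn] at h3; linarith
    linarith
  -- min on compact interval
  have hcompact : IsCompact (Set.Icc a b) := isCompact_Icc
  have hne : (Set.Icc a b).Nonempty := ⟨1, ha1, hb1⟩
  have hfcont' : ContinuousOn f (Set.Icc a b) := by
    apply ContinuousOn.div
    · exact (continuous_const.add (hHcont.comp (continuous_id.smul continuous_const))).continuousOn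
    · exact continuousOn_id
    · rintro x ⟨hx, -⟩
      exact ne_of_gt (lt_of_lt_of_le hapos hx)
  obtain ⟨l₀, hl₀mem, hl₀min⟩ := hcompact.exists_isMinOn hne hfcont'
  have hl₀pos : 0 < l₀ := lt_of_lt_of_le hapos hl₀mem.1
  have hf1 : f 1 = M := by rw [hf, hM]; simp
  -- l₀ minimizes f over all positive l
  have hmin : ∀ l : ℝ, 0 < l → f l₀ ≤ f l := by
    intro l hl
    rcases lt_or_ge l a with h | h
    · have := houtlow l hl h
      have h2 : f l₀ ≤ f 1 := hl₀min ⟨ha1, hb1⟩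
      rw [hf1] at h2; linarith
    rcases le_or_gt l b with h' | h'
    · exact hl₀min ⟨h, h'⟩
    · have := houthigh l h'
      have h2 : f l₀ ≤ f 1 := hl₀min ⟨ha1, hb1⟩
      rw [hf1] at h2; linarith
  have heq : f l₀ = effAlpha H p := by
    apply le_antisymm
    · refine le_csInf ⟨(1 + H ((1:ℝ) • p)) / 1, 1, one_pos, rfl⟩ ?_
      rintro y ⟨l, hl, rfl⟩
      exact hmin l hl
    · exact csInf_le hbdd ⟨l₀, hl₀pos, rfl⟩
  refine ⟨l₀, ⟨hl₀pos, heq⟩, ?_⟩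
  rintro l hl
  rcases le_total l l₀ with h | h
  · exact eq_of_both_min H hgrow hconv hrad p hp hbdd hl ⟨hl₀pos, heq⟩ h
  · exact (eq_of_both_min H hgrow hconv hrad p hp hbdd ⟨hl₀pos, heq⟩ hl h).symm
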